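/- Let ω ∈ ℤⁿ and let b₀,…,b_k ∈ ℂ[x₁,…,xₙ] be nonzero polynomials such that for each j the initial form in_ω(b_j) is a single term, and assume {b₀,…,b_k} is a SAGBI basis for S = ℂ[b₀,…,b_k] with respect to ω. Let T be the ℂ-subalgebra of ℂ[x₁,…,xₙ][t] generated by (b₀)_t^ω,…,(b_k)_t^ω. Then the image of T under the evaluation homomorphism ℂ[x₁,…,xₙ][t] → ℂ[x₁,…,xₙ] sending t ↦ 1 equals S, and the image of T under the evaluation homomorphism sending t ↦ 0 equals the initial algebra in_ω(S), i.e., the ℂ-linear span of {in_ω(f) : f ∈ S, f ≠ 0}. -/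

import Mathlib

open MvPolynomial Polynomial

noncomputable section

/-- The weighted dot product `⟨ω, α⟩ = Σ_i ω_i · α_i`. -/
def wdot {σ : Type*} (ω : σ → ℤ) (α : σ →₀ ℕ) : ℤ :=
  α.sum fun i e => ω i * (e : ℤ)

/-- The ω-degree `v_ω(f) = max{⟨ω,α⟩ : α ∈ supp f}` (junk value `0` for `f = 0`). -/
def wdeg {σ : Type*} (ω : σ → ℤ) (f : MvPolynomial σ ℂ) : ℤ :=
  WithBot.unbotD 0 (f.support.sup fun α => (wdot ω α : WithBot ℤ))

/-- The initial form `in_ω(f)`, the sum of the terms of `f` of maximal ω-degree. -/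
def initForm {σ : Type*} (ω : σ → ℤ) (f : MvPolynomial σ ℂ) : MvPolynomial σ ℂ :=
  ∑ α ∈ f.support.filter (fun α => wdot ω α = wdeg ω f), monomial α (f.coeff α)

/-- The ω-homogenization `f_t^ω = Σ_α c_α t^{v_ω(f) − ⟨ω,α⟩} x^α ∈ ℂ[x₁,…,xₙ][t]`. -/
def homog {σ : Type*} (ω : σ → ℤ) (f : MvPolynomial σ ℂ) :
    Polynomial (MvPolynomial σ ℂ) :=
  ∑ α ∈ f.support,
    Polynomial.C (monomial α (f.coeff α)) * Polynomial.X ^ (wdeg ω f - wdot ω α).toNat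

/-- The homogenized ideal `I_t^ν`, generated by `{f_t^ν : f ∈ I, f ≠ 0}`. -/
def idealHomog {σ : Type*} (ν : σ → ℤ) (I : Ideal (MvPolynomial σ ℂ)) :
    Ideal (Polynomial (MvPolynomial σ ℂ)) :=
  Ideal.span {g | ∃ f ∈ I, f ≠ 0 ∧ g = homog ν f}

/-- The initial ideal `in_ν(I)`, generated by `{in_ν(f) : f ∈ I, f ≠ 0}`. -/
def initIdeal {σ : Type*} (ν : σ → ℤ) (I : Ideal (MvPolynomial σ ℂ)) :
    Ideal (MvPolynomial σ ℂ) :=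
  Ideal.span {g | ∃ f ∈ I, f ≠ 0 ∧ g = initForm ν f}

/-- `{b i}` is a SAGBI basis for `S = ℂ[b₀,…,b_k]` with respect to `ω` if the ℂ-linear span
of `{in_ω(f) : f ∈ S, f ≠ 0}` equals the ℂ-subalgebra generated by the `in_ω(b_i)`. -/
def IsSagbiBasis {σ : Type*} {ι : Type*} (ω : σ → ℤ) (b : ι → MvPolynomial σ ℂ) : Prop :=
  Submodule.span ℂ
      {g | ∃ f ∈ Algebra.adjoin ℂ (Set.range b), f ≠ 0 ∧ g = initForm ω f}
    = Subalgebra.toSubmodule (Algebra.adjoin ℂ (Set.range fun i => initForm ω (b i)))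

lemma wdot_le_wdeg {σ : Type*} (ω : σ → ℤ) (f : MvPolynomial σ ℂ) {α : σ →₀ ℕ}
    (h : α ∈ f.support) : wdot ω α ≤ wdeg ω f := by
  have hle : (wdot ω α : WithBot ℤ) ≤ f.support.sup fun β => (wdot ω β : WithBot ℤ) :=
    Finset.le_sup (f := fun β => (wdot ω β : WithBot ℤ)) h
  rcases hsup : f.support.sup fun β => (wdot ω β : WithBot ℤ) with _ | s
  · rw [hsup] at hle; exact absurd hle (WithBot.not_coe_le_bot _)
  · rw [hsup] at hle
    rw [wdeg, hsup]
    exact WithBot.coe_le_coe.mp hle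

lemma eval_one_homog {σ : Type*} (ω : σ → ℤ) (f : MvPolynomial σ ℂ) :
    Polynomial.eval 1 (homog ω f) = f := by
  rw [homog, Polynomial.eval_finset_sum]
  simp [MvPolynomial.support_sum_monomial_coeff]

lemma eval_zero_homog {σ : Type*} (ω : σ → ℤ) (f : MvPolynomial σ ℂ) :
    Polynomial.eval 0 (homog ω f) = initForm ω f := by
  rw [homog, initForm, Polynomial.eval_finset_sum, Finset.sum_filter]
  refine Finset.sum_congr rfl fun α hα => ?_
  have hle := wdot_le_wdeg ω f hα
  simp only [Polynomial.eval_mul, Polynomial.eval_C, Polynomial.eval_pow, Polynomial.eval_X]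
  by_cases h : wdot ω α = wdeg ω f
  · have : (wdeg ω f - wdot ω α).toNat = 0 := by omega
    simp [h, this]
  · rw [zero_pow (by omega : (wdeg ω f - wdot ω α).toNat ≠ 0)]
    simp [h]

/-- Evaluation at `c` as a `ℂ`-algebra hom. -/
def evalAlgHom {σ : Type*} (c : MvPolynomial σ ℂ) :
    Polynomial (MvPolynomial σ ℂ) →ₐ[ℂ] MvPolynomial σ ℂ :=
  { Polynomial.evalRingHom c with
    commutes' := fun r => by
      simp [Polynomial.algebraMap_apply] }

/-- If the nonzero polynomials `b₀,…,b_k` have single-term initial forms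
and form a SAGBI basis for `S = ℂ[b₀,…,b_k]` with respect to `ω`, and `T` is the
ℂ-subalgebra of `ℂ[x₁,…,xₙ][t]` generated by `(b₀)_t^ω,…,(b_k)_t^ω`, then the image of
`T` under the evaluation `t ↦ 1` equals `S`, and the image of `T` under the evaluation
`t ↦ 0` equals the initial algebra `in_ω(S)`, i.e. the ℂ-linear span of
`{in_ω(f) : f ∈ S, f ≠ 0}`. -/
theorem sagbi_degeneration_fibres {n k : ℕ} (ω : Fin n → ℤ)
    (b : Fin (k + 1) → MvPolynomial (Fin n) ℂ) (hb : ∀ j, b j ≠ 0)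
    (hmono : ∀ j, ∃ (a : Fin n →₀ ℕ) (cc : ℂ), cc ≠ 0 ∧
      initForm ω (b j) = monomial a cc)
    (hsagbi : IsSagbiBasis ω b)
    (T : Subalgebra ℂ (Polynomial (MvPolynomial (Fin n) ℂ)))
    (hT : T = Algebra.adjoin ℂ (Set.range fun j => homog ω (b j))) :
    (Polynomial.evalRingHom (1 : MvPolynomial (Fin n) ℂ)) ''
        (T : Set (Polynomial (MvPolynomial (Fin n) ℂ)))
      = (Algebra.adjoin ℂ (Set.range b) : Set (MvPolynomial (Fin n) ℂ)) ∧
    (Polynomial.evalRingHom (0 : MvPolynomial (Fin n) ℂ)) ''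
        (T : Set (Polynomial (MvPolynomial (Fin n) ℂ)))
      = (Submodule.span ℂ
          {g | ∃ f ∈ Algebra.adjoin ℂ (Set.range b), f ≠ 0 ∧ g = initForm ω f} :
            Set (MvPolynomial (Fin n) ℂ)) := by
  subst hT
  have key : ∀ c : MvPolynomial (Fin n) ℂ,
      (Polynomial.evalRingHom c) ''
          ((Algebra.adjoin ℂ (Set.range fun j => homog ω (b j)) :
            Subalgebra ℂ (Polynomial (MvPolynomial (Fin n) ℂ))) :
            Set (Polynomial (MvPolynomial (Fin n) ℂ)))
        = (Algebra.adjoin ℂ (Set.range fun j => Polynomial.eval c (homog ω (b j))) :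
            Set (MvPolynomial (Fin n) ℂ)) := by
    intro c
    have h1 : (Polynomial.evalRingHom c) ''
        ((Algebra.adjoin ℂ (Set.range fun j => homog ω (b j)) :
          Subalgebra ℂ (Polynomial (MvPolynomial (Fin n) ℂ))) :
          Set (Polynomial (MvPolynomial (Fin n) ℂ)))
        = ((Algebra.adjoin ℂ (Set.range fun j => homog ω (b j))).map (evalAlgHom c) :
            Set (MvPolynomial (Fin n) ℂ)) := by
      rw [Subalgebra.coe_map]; rfl
    rw [h1, AlgHom.map_adjoin]
    congr 1
    rw [← Set.range_comp]
    rfl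
  constructor
  · rw [key 1]
    have h1 : (Set.range fun j => Polynomial.eval 1 (homog ω (b j))) = Set.range b := by
      ext g; simp [eval_one_homog]
    rw [h1]
  · rw [key 0]
    have h2 : (Set.range fun j => Polynomial.eval 0 (homog ω (b j)))
        = Set.range fun j => initForm ω (b j) := by
      ext g; simp [eval_zero_homog]
    rw [h2]
    have := hsagbi
    rw [IsSagbiBasis] at this
    rw [this]
    rfl
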